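/- Let ρ be a 4×4 density matrix whose support is contained in span{|00⟩, |11⟩, (|01⟩+|10⟩)/√2}, and let H be a Hermitian operator with supp(H) ⊆ supp(ρ). Then Tr(Z₁H) = Tr(Z₂H), Tr(X₁Y₂H) = Tr(Y₁X₂H), and Tr(H) = Tr(X₁X₂H) + Tr(Y₁Y₂H) + Tr(Z₁Z₂H), where X_j, Y_j, Z_j are Pauli matrices acting on qubit j of the two-qubit space C²⊗C². -/
import Mathlib

open ComplexOrder Matrix Kronecker

noncomputable def pauliX : Matrix (Fin 2) (Fin 2) ℂ := !![0, 1; 1, 0]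
noncomputable def pauliY : Matrix (Fin 2) (Fin 2) ℂ := !![0, -Complex.I; Complex.I, 0]
noncomputable def pauliZ : Matrix (Fin 2) (Fin 2) ℂ := !![1, 0; 0, -1]

/-- `|00⟩`. -/
noncomputable def e00 : Fin 2 × Fin 2 → ℂ := fun p => if p = (0, 0) then 1 else 0
/-- `|11⟩`. -/
noncomputable def e11 : Fin 2 × Fin 2 → ℂ := fun p => if p = (1, 1) then 1 else 0
/-- `(|01⟩ + |10⟩)/√2`. -/
noncomputable def ePlus : Fin 2 × Fin 2 → ℂ :=
  fun p => if p = (0, 1) ∨ p = (1, 0) then ((Real.sqrt 2 : ℂ))⁻¹ else 0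

/-- **Prior information from a symmetric-supported density matrix.**
If `ρ` is a two-qubit density matrix supported inside `span{|00⟩, |11⟩, (|01⟩+|10⟩)/√2}`
and `H` is Hermitian with `supp H ⊆ supp ρ`, then `Tr(Z₁H) = Tr(Z₂H)`,
`Tr(X₁Y₂H) = Tr(Y₁X₂H)`, and `Tr(H) = Tr(X₁X₂H) + Tr(Y₁Y₂H) + Tr(Z₁Z₂H)`. -/
theorem symmetric_support_trace_constraints
    (ρ H : Matrix (Fin 2 × Fin 2) (Fin 2 × Fin 2) ℂ)
    (hρ : ρ.PosSemidef) (hρtr : ρ.trace = 1)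
    (hsupp : LinearMap.range (Matrix.toLin' ρ) ≤
      Submodule.span ℂ {e00, e11, ePlus})
    (hH : H.IsHermitian)
    (hker : LinearMap.ker (Matrix.toLin' ρ) ≤ LinearMap.ker (Matrix.toLin' H))
    (hrange : LinearMap.range (Matrix.toLin' H) ≤ LinearMap.range (Matrix.toLin' ρ)) :
    ((pauliZ ⊗ₖ (1 : Matrix (Fin 2) (Fin 2) ℂ)) * H).trace =
      (((1 : Matrix (Fin 2) (Fin 2) ℂ) ⊗ₖ pauliZ) * H).trace ∧
    ((pauliX ⊗ₖ pauliY) * H).trace = ((pauliY ⊗ₖ pauliX) * H).trace ∧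
    H.trace = ((pauliX ⊗ₖ pauliX) * H).trace + ((pauliY ⊗ₖ pauliY) * H).trace +
      ((pauliZ ⊗ₖ pauliZ) * H).trace := by
  set s : Fin 2 × Fin 2 → ℂ :=
    fun p => if p = (0, 1) then 1 else if p = (1, 0) then -1 else 0 with hsdef
  have horth : ∀ w ∈ Submodule.span ℂ {e00, e11, ePlus}, star s ⬝ᵥ w = 0 := by
    intro w hw
    induction hw using Submodule.span_induction with
    | mem x hx =>
        rcases hx with rfl | rfl | rfl <;>
          simp [dotProduct, Fintype.sum_prod_type, e00, e11, ePlus, hsdef,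
            Fin.sum_univ_two, Prod.ext_iff]
    | zero => simp
    | add x y _ _ hx hy => rw [dotProduct_add, hx, hy, add_zero]
    | smul c x _ hx => rw [dotProduct_smul, hx, smul_zero]
  have hρs : ρ *ᵥ s = 0 := by
    refine (hρ.dotProduct_mulVec_zero_iff s).mp ?_
    exact horth _ (hsupp ⟨s, by simp [Matrix.toLin'_apply]⟩)
  have hHs : H *ᵥ s = 0 := by
    have hm : s ∈ LinearMap.ker (Matrix.toLin' ρ) := by
      simpa [Matrix.toLin'_apply] using hρs
    simpa [Matrix.toLin'_apply] using hker hm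
  have hcol : ∀ i, H i (0, 1) = H i (1, 0) := by
    intro i
    have := congrFun hHs i
    simp [mulVec, dotProduct, Fintype.sum_prod_type, Fin.sum_univ_two, hsdef,
      Prod.ext_iff, sub_eq_zero] at this
    linear_combination this
  have hrow : ∀ j, H (0, 1) j = H (1, 0) j := by
    intro j
    have h1 := hH.apply j (0, 1)
    have h2 := hH.apply j (1, 0)
    have : star (H (0, 1) j) = star (H (1, 0) j) := by rw [h1, h2, hcol j]
    exact star_injective this
  have hA : H (0, 1) (0, 1) = H (1, 0) (1, 0) := (hrow (0, 1)).trans (hcol (1, 0))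
  have hB : H (0, 1) (1, 0) = H (1, 0) (1, 0) := hrow (1, 0)
  have hC : H (1, 0) (0, 1) = H (1, 0) (1, 0) := hcol (1, 0)
  refine ⟨?_, ?_, ?_⟩ <;>
    simp only [Matrix.trace, Matrix.diag, Matrix.mul_apply, kroneckerMap_apply,
      Fintype.sum_prod_type, Fin.sum_univ_two, pauliX, pauliY, pauliZ, Matrix.one_apply,
      Matrix.cons_val', Matrix.cons_val_zero, Matrix.cons_val_one,
      Matrix.head_cons, Matrix.head_fin_const, Matrix.empty_val',
      Matrix.cons_val_fin_one, Fin.zero_eq_one_iff, Fin.one_eq_zero_iff] <;>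
    norm_num [hA, hB, hC] <;>
    ring
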